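/- Theorem 2 (FDR control of multi-step QuTE, independent p-values): for every graph G, every integer c ≥ 0 and every level α ∈ (0,1), if the N p-values are mutually independent and every null p-value is superuniform, then the c-step QuTE procedure at level α satisfies FDR ≤ α·|H^0|/N. -/

import Mathlib

open MeasureTheory ProbabilityTheory Finset

open Classical in
/-- The Benjamini–Hochberg count `k̂_α(P)`: the largest `k ∈ {0,…,N}` such that
at least `k` of the p-values are `≤ α k / N`, where `N` is the number of hypotheses. -/
noncomputable def bhCount {I : Type*} [Fintype I] (α : ℝ) (P : I → ℝ) : ℕ :=
  Nat.findGreatest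
    (fun k => k ≤ (Finset.univ.filter fun i => P i ≤ α * k / (Fintype.card I)).card)
    (Fintype.card I)

open Classical in
/-- The Benjamini–Hochberg rejection set `Rej_α(P) = {i : P i ≤ α k̂_α(P) / N}`. -/
noncomputable def bhRej {I : Type*} [Fintype I] (α : ℝ) (P : I → ℝ) : Finset I :=
  Finset.univ.filter fun i => P i ≤ α * (bhCount α P) / (Fintype.card I)

open Classical in
/-- The p-value vector `P^{b,c}` known to node `b` after `c` rounds of communication:
every p-value hosted at a node of graph distance more than `c` from `b` is replaced by `1`. -/
noncomputable def quteMasked {V : Type*} (G : SimpleGraph V) (n : V → ℕ)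
    (c : ℕ) (P : (Σ a : V, Fin (n a)) → ℝ) (b : V) : (Σ a : V, Fin (n a)) → ℝ :=
  fun i => if G.edist b i.1 ≤ c then P i else 1

open Classical in
/-- The rejection set of the `c`-step QuTE procedure at level `α`: hypothesis `j` at node `a`
is rejected iff some node `b` within graph distance `c` of `a` rejects it in its local BH test
at level `α` on the p-values it knows (unknown p-values set to `1`). -/
noncomputable def quteRej {V : Type*} [Fintype V] (G : SimpleGraph V) (n : V → ℕ)
    (c : ℕ) (α : ℝ) (P : (Σ a : V, Fin (n a)) → ℝ) : Finset (Σ a : V, Fin (n a)) :=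
  Finset.univ.filter fun i => ∃ b : V, G.edist i.1 b ≤ c ∧
    P i ≤ α * (bhCount α (quteMasked G n c P b)) / (Fintype.card (Σ a : V, Fin (n a)))

/-! ### Auxiliary lemmas about the BH count -/

section BH

variable {I : Type*} [Fintype I] {α : ℝ} {Q Q' : I → ℝ}

lemma bhCount_le_card (α : ℝ) (Q : I → ℝ) : bhCount α Q ≤ Fintype.card I :=
  Nat.findGreatest_le _

open Classical in
lemma bhCount_spec (α : ℝ) (Q : I → ℝ) :
    bhCount α Q ≤
      (Finset.univ.filter fun i => Q i ≤ α * (bhCount α Q) / (Fintype.card I)).card :=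
  Nat.findGreatest_spec
    (P := fun k => k ≤ (Finset.univ.filter fun i => Q i ≤ α * k / (Fintype.card I)).card)
    (m := 0) (Nat.zero_le _) (Nat.zero_le _)

open Classical in
lemma le_bhCount {m : ℕ} (hm : m ≤ Fintype.card I)
    (h : m ≤ (Finset.univ.filter fun i => Q i ≤ α * m / (Fintype.card I)).card) :
    m ≤ bhCount α Q :=
  Nat.le_findGreatest hm h

lemma bhCount_mono (h : ∀ i, Q' i ≤ Q i) : bhCount α Q ≤ bhCount α Q' := by
  classical
  refine le_bhCount (bhCount_le_card α Q) ?_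
  refine le_trans (bhCount_spec α Q) (Finset.card_le_card ?_)
  intro i hi
  simp only [Finset.mem_filter, Finset.mem_univ, true_and] at hi ⊢
  exact le_trans (h i) hi

open Classical in
/-- The vector `x` with coordinate `i` replaced by `0`. -/
noncomputable def zeroAt {I : Type*} (x : I → ℝ) (i : I) : I → ℝ :=
  fun j => if j = i then 0 else x j

omit [Fintype I] in
lemma zeroAt_le (x : I → ℝ) (i : I) (hx : 0 ≤ x i) : ∀ j, zeroAt x i j ≤ x j := by
  intro j
  unfold zeroAt
  by_cases h : j = i
  · subst h; simp [hx]
  · simp [h]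

lemma bhCount_zeroAt_le (i : I) (hx : 0 ≤ Q i) :
    bhCount α Q ≤ bhCount α (zeroAt Q i) :=
  bhCount_mono (zeroAt_le Q i hx)

lemma bhCount_zeroAt_eq (hα : 0 ≤ α) (i : I) (hx : 0 ≤ Q i)
    (hle : Q i ≤ α * (bhCount α (zeroAt Q i)) / (Fintype.card I)) :
    bhCount α Q = bhCount α (zeroAt Q i) := by
  classical
  refine le_antisymm (bhCount_zeroAt_le i hx) ?_
  set m := bhCount α (zeroAt Q i) with hm
  refine le_bhCount (hm ▸ bhCount_le_card α (zeroAt Q i)) ?_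
  have hfil : (Finset.univ.filter fun j => Q j ≤ α * m / (Fintype.card I)) =
      (Finset.univ.filter fun j => zeroAt Q i j ≤ α * m / (Fintype.card I)) := by
    apply Finset.filter_congr
    intro j _
    by_cases h : j = i
    · subst h
      simp only [zeroAt, if_pos rfl]
      constructor
      · intro _; positivity
      · intro _; exact hle
    · simp [zeroAt, h]
  rw [hfil]
  exact bhCount_spec α (zeroAt Q i)

end BH

/-! ### The best count known near a node, and its properties -/

open Classical in
/-- The largest BH count computed by any node within distance `c` of `a`. -/
noncomputable def quteKi {V : Type*} [Fintype V] (G : SimpleGraph V) (n : V → ℕ)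
    (c : ℕ) (α : ℝ) (a : V) (x : (Σ a : V, Fin (n a)) → ℝ) : ℕ :=
  (Finset.univ.filter fun b => G.edist a b ≤ c).sup
    fun b => bhCount α (quteMasked G n c x b)

section QK

variable {V : Type*} [Fintype V] {G : SimpleGraph V} {n : V → ℕ} {c : ℕ} {α : ℝ}
  {x : (Σ a : V, Fin (n a)) → ℝ}

open Classical

lemma quteKi_le_card (a : V) (x : (Σ a : V, Fin (n a)) → ℝ) :
    quteKi G n c α a x ≤ Fintype.card (Σ a : V, Fin (n a)) :=
  Finset.sup_le fun _ _ => bhCount_le_card α _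

lemma near_self (a : V) : a ∈ (Finset.univ.filter fun b => G.edist a b ≤ (c : ℕ∞)) := by
  simp [SimpleGraph.edist_self]

omit [Fintype V] in
lemma quteMasked_zeroAt_near {i : Σ a : V, Fin (n a)} {b : V}
    (h : G.edist b i.1 ≤ c) :
    quteMasked G n c (zeroAt x i) b = zeroAt (quteMasked G n c x b) i := by
  funext j
  by_cases hj : j = i
  · subst hj
    simp [quteMasked, zeroAt, h]
  · simp [quteMasked, zeroAt, hj]

omit [Fintype V] in
lemma quteMasked_zeroAt_far {i : Σ a : V, Fin (n a)} {b : V}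
    (h : ¬ G.edist b i.1 ≤ c) :
    quteMasked G n c (zeroAt x i) b = quteMasked G n c x b := by
  funext j
  by_cases hj : j = i
  · subst hj
    simp [quteMasked, zeroAt, h]
  · simp [quteMasked, zeroAt, hj]

lemma quteKi_zeroAt_le (a : V) (i : Σ a : V, Fin (n a)) (hx : 0 ≤ x i) :
    quteKi G n c α a x ≤ quteKi G n c α a (zeroAt x i) := by
  refine Finset.sup_mono_fun fun b _ => ?_
  refine bhCount_mono fun j => ?_
  by_cases hb : G.edist b j.1 ≤ c
  · by_cases hj : j = i
    · subst hj
      simp [quteMasked, zeroAt, hb, hx]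
    · simp [quteMasked, zeroAt, hb, hj]
  · simp [quteMasked, hb]

lemma le_quteKi {a : V} {b : V} (hb : G.edist a b ≤ c) :
    bhCount α (quteMasked G n c x b) ≤ quteKi G n c α a x :=
  Finset.le_sup (f := fun b => bhCount α (quteMasked G n c x b))
    (Finset.mem_filter.mpr ⟨Finset.mem_univ _, hb⟩)

lemma quteKi_zeroAt_eq (hα : 0 ≤ α) (i : Σ a : V, Fin (n a)) (hx : 0 ≤ x i)
    (hle : x i ≤ α * (quteKi G n c α i.1 (zeroAt x i)) / (Fintype.card (Σ a : V, Fin (n a)))) :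
    quteKi G n c α i.1 x = quteKi G n c α i.1 (zeroAt x i) := by
  refine le_antisymm (quteKi_zeroAt_le i.1 i hx) ?_
  obtain ⟨b, hb, hsup⟩ := Finset.exists_mem_eq_sup
    (Finset.univ.filter fun b => G.edist i.1 b ≤ (c : ℕ∞)) ⟨i.1, near_self i.1⟩
    (fun b => bhCount α (quteMasked G n c (zeroAt x i) b))
  simp only [Finset.mem_filter, Finset.mem_univ, true_and] at hb
  have hb' : G.edist b i.1 ≤ c := by rwa [SimpleGraph.edist_comm]
  have hmask : quteMasked G n c (zeroAt x i) b = zeroAt (quteMasked G n c x b) i :=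
    quteMasked_zeroAt_near hb'
  have hQi : quteMasked G n c x b i = x i := by simp [quteMasked, hb']
  have hkey : bhCount α (quteMasked G n c x b) = quteKi G n c α i.1 (zeroAt x i) := by
    rw [show quteKi G n c α i.1 (zeroAt x i) = bhCount α (zeroAt (quteMasked G n c x b) i) by
      rw [quteKi, hsup, hmask]]
    refine bhCount_zeroAt_eq hα i (hQi ▸ hx) ?_
    rw [hQi]
    rw [quteKi, hsup, hmask] at hle
    exact hle
  calc quteKi G n c α i.1 (zeroAt x i) = bhCount α (quteMasked G n c x b) := hkey.symm
    _ ≤ quteKi G n c α i.1 x := le_quteKi hb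

lemma mem_quteRej_iff (hα : 0 ≤ α) {i : Σ a : V, Fin (n a)} :
    i ∈ quteRej G n c α x ↔
      x i ≤ α * (quteKi G n c α i.1 x) / (Fintype.card (Σ a : V, Fin (n a))) := by
  rw [quteRej, Finset.mem_filter]
  simp only [Finset.mem_univ, true_and]
  constructor
  · rintro ⟨b, hb, hle⟩
    refine le_trans hle ?_
    have hk : bhCount α (quteMasked G n c x b) ≤ quteKi G n c α i.1 x := le_quteKi hb
    gcongr
  · intro h
    obtain ⟨b, hb, hsup⟩ := Finset.exists_mem_eq_sup
      (Finset.univ.filter fun b => G.edist i.1 b ≤ (c : ℕ∞)) ⟨i.1, near_self i.1⟩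
      (fun b => bhCount α (quteMasked G n c x b))
    simp only [Finset.mem_filter, Finset.mem_univ, true_and] at hb
    exact ⟨b, hb, by rw [quteKi, hsup] at h; exact h⟩

lemma bhCount_le_card_quteRej (hα : α ∈ Set.Ioo (0:ℝ) 1)
    (hN : 0 < Fintype.card (Σ a : V, Fin (n a))) (b : V) :
    bhCount α (quteMasked G n c x b) ≤ (quteRej G n c α x).card := by
  set N := Fintype.card (Σ a : V, Fin (n a)) with hNdef
  set k := bhCount α (quteMasked G n c x b) with hk
  have hspec := bhCount_spec α (quteMasked G n c x b)
  rw [← hk] at hspec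
  refine le_trans hspec (Finset.card_le_card ?_)
  intro j hj
  simp only [Finset.mem_filter, Finset.mem_univ, true_and] at hj
  have hlt1 : α * k / N < 1 := by
    have hkN : (k : ℝ) ≤ N := by exact_mod_cast (hk ▸ bhCount_le_card α (quteMasked G n c x b))
    have hNpos : (0:ℝ) < N := by exact_mod_cast hN
    calc α * k / N ≤ α * N / N := by gcongr; exact hα.1.le
      _ = α := by field_simp
      _ < 1 := hα.2
  by_cases hb : G.edist b j.1 ≤ (c : ℕ∞)
  · have hxj : x j ≤ α * k / N := by
      rw [quteMasked, if_pos hb] at hj; exact hj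
    refine Finset.mem_filter.mpr ⟨Finset.mem_univ _, b, by rwa [SimpleGraph.edist_comm], hxj⟩
  · exfalso
    rw [quteMasked, if_neg hb] at hj
    exact absurd (lt_of_le_of_lt hj hlt1) (lt_irrefl 1)

lemma quteKi_le_card_quteRej (hα : α ∈ Set.Ioo (0:ℝ) 1)
    (hN : 0 < Fintype.card (Σ a : V, Fin (n a))) (a : V) :
    quteKi G n c α a x ≤ (quteRej G n c α x).card :=
  Finset.sup_le fun b _ => bhCount_le_card_quteRej hα hN b

end QK

/-! ### Measurability lemmas -/

section Meas
open Classical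

lemma measurable_card_filter_le {I : Type*} [Fintype I] (t : ℝ) :
    Measurable fun x : I → ℝ => (Finset.univ.filter fun i => x i ≤ t).card := by
  have : ∀ x : I → ℝ, (Finset.univ.filter fun i => x i ≤ t).card
      = ∑ i : I, if x i ≤ t then 1 else 0 := by
    intro x
    rw [Finset.card_filter]
  simp_rw [this]
  refine Finset.measurable_sum _ fun i _ => Measurable.ite ?_ measurable_const measurable_const
  exact measurableSet_le (measurable_pi_apply i) measurable_const

lemma measurable_bhCount {I : Type*} [Fintype I] (α : ℝ) :
    Measurable fun x : I → ℝ => bhCount α x := by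
  unfold bhCount
  refine measurable_findGreatest fun k _ => ?_
  have : {x : I → ℝ | k ≤ (Finset.univ.filter fun i => x i ≤ α * k / (Fintype.card I)).card}
      = (fun x : I → ℝ => (Finset.univ.filter fun i => x i ≤ α * k / (Fintype.card I)).card)
        ⁻¹' Set.Ici k := rfl
  rw [this]
  exact measurable_card_filter_le _ measurableSet_Ici

lemma measurable_quteMasked {V : Type*} (G : SimpleGraph V) (n : V → ℕ) (c : ℕ) (b : V) :
    Measurable fun x : (Σ a : V, Fin (n a)) → ℝ => quteMasked G n c x b := by
  refine measurable_pi_lambda _ fun j => ?_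
  unfold quteMasked
  by_cases h : G.edist b j.1 ≤ (c : ℕ∞)
  · simpa [h] using measurable_pi_apply j
  · simpa [h] using (measurable_const : Measurable fun _ : (Σ a : V, Fin (n a)) → ℝ => (1:ℝ))

lemma measurable_finset_sup_nat {γ β : Type*} [MeasurableSpace β] (s : Finset γ)
    {f : γ → β → ℕ} (hf : ∀ b, Measurable (f b)) :
    Measurable fun x => s.sup fun b => f b x := by
  classical
  induction s using Finset.cons_induction with
  | empty => simpa using measurable_const
  | cons a s ha ih =>
    simp_rw [Finset.sup_cons]
    exact (hf a).max ih

lemma measurable_quteKi {V : Type*} [Fintype V] (G : SimpleGraph V) (n : V → ℕ)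
    (c : ℕ) (α : ℝ) (a : V) :
    Measurable fun x : (Σ a : V, Fin (n a)) → ℝ => quteKi G n c α a x := by
  unfold quteKi
  exact measurable_finset_sup_nat _ fun b =>
    (measurable_bhCount α).comp (measurable_quteMasked G n c b)

end Meas

/-- **Theorem 2 (FDR control of multi-step QuTE, independent p-values).**
For every graph `G` and level `α ∈ (0,1)`, if the `N` p-values are mutually independent
and every null p-value is superuniform, then the `c`-step QuTE procedure at level `α`
satisfies `FDR ≤ α |H⁰| / N`. -/
theorem qute_multi_step_fdr_control_indep
    {V : Type*} [Fintype V] [DecidableEq V] [Nonempty V] (G : SimpleGraph V)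
    (n : V → ℕ) (hn : ∀ a, 1 ≤ n a)
    {Ω : Type*} [MeasurableSpace Ω] (μ : Measure Ω) [IsProbabilityMeasure μ]
    (P : Ω → (Σ a : V, Fin (n a)) → ℝ)
    (hPmeas : ∀ i, Measurable fun ω => P ω i)
    (hPrange : ∀ ω i, P ω i ∈ Set.Icc (0 : ℝ) 1)
    (hindep : iIndepFun
      (fun i ω => P ω i) μ)
    (H0 : Finset (Σ a : V, Fin (n a)))
    (hnull : ∀ i ∈ H0, ∀ u ∈ Set.Icc (0 : ℝ) 1,
      μ {ω | P ω i ≤ u} ≤ ENNReal.ofReal u)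
    (α : ℝ) (hα : α ∈ Set.Ioo (0 : ℝ) 1) (c : ℕ) :
    ∫ ω, (((quteRej G n c α (P ω) ∩ H0).card : ℝ) /
        (max ((quteRej G n c α (P ω)).card) 1 : ℕ)) ∂μ
      ≤ α * H0.card / Fintype.card (Σ a : V, Fin (n a)) := by
  classical
  have hNE : Nonempty (Σ a : V, Fin (n a)) :=
    ⟨⟨Classical.arbitrary V, ⟨0, lt_of_lt_of_le Nat.zero_lt_one (hn _)⟩⟩⟩
  set N := Fintype.card (Σ a : V, Fin (n a)) with hNdef
  have hNpos : 0 < N := Fintype.card_pos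
  have hNR : (0:ℝ) < (N:ℝ) := by exact_mod_cast hNpos
  have hα0 : (0:ℝ) ≤ α := hα.1.le
  -- the leave-one-out count
  set F : (Σ a : V, Fin (n a)) → Ω → ℕ :=
    fun i ω => quteKi G n c α i.1 (zeroAt (P ω) i) with hFdef
  have hPvec : Measurable fun ω => P ω := measurable_pi_lambda _ hPmeas
  have hzvec : ∀ i, Measurable fun ω => zeroAt (P ω) i := by
    intro i
    refine measurable_pi_lambda _ fun j => ?_
    by_cases h : j = i
    · subst h; simpa [zeroAt] using (measurable_const : Measurable fun _ : Ω => (0:ℝ))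
    · simpa [zeroAt, h] using hPmeas j
  have hFmeas : ∀ i, Measurable (F i) :=
    fun i => (measurable_quteKi G n c α i.1).comp (hzvec i)
  have hFle : ∀ i ω, F i ω ≤ N := fun i ω => quteKi_le_card i.1 _
  -- measurability of rejection events and cardinalities
  have hcastmeas : Measurable fun k : ℕ => (k : ℝ) := measurable_from_top
  have hmemMeas : ∀ i, MeasurableSet {ω | i ∈ quteRej G n c α (P ω)} := by
    intro i
    have hset : {ω | i ∈ quteRej G n c α (P ω)} =
        {ω | P ω i ≤ α * (quteKi G n c α i.1 (P ω)) / N} := by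
      ext ω; exact mem_quteRej_iff hα0
    rw [hset]
    exact measurableSet_le (hPmeas i)
      (((hcastmeas.comp ((measurable_quteKi G n c α i.1).comp hPvec)).const_mul α).div_const N)
  have hRcardEq : ∀ ω, (quteRej G n c α (P ω)).card
      = ∑ i : (Σ a : V, Fin (n a)), if i ∈ quteRej G n c α (P ω) then 1 else 0 := by
    intro ω
    rw [← Finset.card_filter]
    congr 1
    rw [Finset.filter_mem_eq_inter, Finset.univ_inter]
  have hRcard : Measurable fun ω => (quteRej G n c α (P ω)).card := by
    simp_rw [hRcardEq]
    exact Finset.measurable_sum _ fun i _ =>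
      Measurable.ite (hmemMeas i) measurable_const measurable_const
  have hVcardEq : ∀ ω, (quteRej G n c α (P ω) ∩ H0).card
      = ∑ i ∈ H0, if i ∈ quteRej G n c α (P ω) then 1 else 0 := by
    intro ω
    rw [← Finset.card_filter]
    congr 1
    rw [Finset.filter_mem_eq_inter, Finset.inter_comm]
  have hVcard : Measurable fun ω => (quteRej G n c α (P ω) ∩ H0).card := by
    simp_rw [hVcardEq]
    exact Finset.measurable_sum _ fun i _ =>
      Measurable.ite (hmemMeas i) measurable_const measurable_const
  -- the main integrand
  set f0 : Ω → ℝ := fun ω => ((quteRej G n c α (P ω) ∩ H0).card : ℝ) /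
      ((max ((quteRej G n c α (P ω)).card) 1 : ℕ) : ℝ) with hf0def
  have hf0meas : Measurable f0 :=
    Measurable.div (hcastmeas.comp hVcard)
      ((measurable_from_top (f := fun m : ℕ => ((max m 1 : ℕ) : ℝ))).comp hRcard)
  have hf0nonneg : ∀ ω, 0 ≤ f0 ω := fun ω => by positivity
  have hf0le1 : ∀ ω, f0 ω ≤ 1 := by
    intro ω
    refine div_le_one_of_le₀ ?_ (by positivity)
    have h1 : (quteRej G n c α (P ω) ∩ H0).card ≤ (quteRej G n c α (P ω)).card :=
      Finset.card_le_card Finset.inter_subset_left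
    have h2 : (quteRej G n c α (P ω)).card ≤ max ((quteRej G n c α (P ω)).card) 1 :=
      le_max_left _ _
    exact_mod_cast le_trans h1 h2
  have hf0int : Integrable f0 μ := by
    refine Integrable.mono' (integrable_const (1:ℝ)) hf0meas.aestronglyMeasurable ?_
    exact Filter.Eventually.of_forall fun ω => by
      rw [Real.norm_eq_abs, abs_of_nonneg (hf0nonneg ω)]; exact hf0le1 ω
  -- the dominating functions
  set g : (Σ a : V, Fin (n a)) → Ω → ℝ :=
    fun i ω => (if P ω i ≤ α * (F i ω) / N then (1:ℝ) else 0) /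
      ((max (F i ω) 1 : ℕ) : ℝ) with hgdef
  have hgEventMeas : ∀ i, MeasurableSet {ω | P ω i ≤ α * (F i ω) / N} := fun i =>
    measurableSet_le (hPmeas i) (((hcastmeas.comp (hFmeas i)).const_mul α).div_const N)
  have hgmeas : ∀ i, Measurable (g i) := by
    intro i
    refine Measurable.div ?_
      ((measurable_from_top (f := fun m : ℕ => ((max m 1 : ℕ) : ℝ))).comp (hFmeas i))
    exact Measurable.ite (hgEventMeas i) measurable_const measurable_const
  have hgnonneg : ∀ i ω, 0 ≤ g i ω := by
    intro i ω
    rw [hgdef]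
    positivity
  have hgle1 : ∀ i ω, g i ω ≤ 1 := by
    intro i ω
    rw [hgdef]
    refine div_le_one_of_le₀ ?_ (by positivity)
    have : ((1:ℕ):ℝ) ≤ ((max (F i ω) 1 : ℕ) : ℝ) := by exact_mod_cast le_max_right _ _
    split <;> simpa using this
  have hgint : ∀ i, Integrable (g i) μ := by
    intro i
    refine Integrable.mono' (integrable_const (1:ℝ)) (hgmeas i).aestronglyMeasurable ?_
    exact Filter.Eventually.of_forall fun ω => by
      rw [Real.norm_eq_abs, abs_of_nonneg (hgnonneg i ω)]; exact hgle1 i ω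
  -- pointwise bound
  have hpt : ∀ ω, f0 ω ≤ ∑ i ∈ H0, g i ω := by
    intro ω
    have hVc : ((quteRej G n c α (P ω) ∩ H0).card : ℝ)
        = ∑ i ∈ H0, if i ∈ quteRej G n c α (P ω) then (1:ℝ) else 0 := by
      rw [hVcardEq ω]
      push_cast
      exact Finset.sum_congr rfl fun i _ => by split <;> simp
    rw [hf0def]
    simp only
    rw [hVc, Finset.sum_div]
    refine Finset.sum_le_sum fun i hi => ?_
    by_cases h : i ∈ quteRej G n c α (P ω)
    · rw [if_pos h]
      have hx0 : 0 ≤ P ω i := (hPrange ω i).1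
      have hle : P ω i ≤ α * (quteKi G n c α i.1 (P ω)) / N := (mem_quteRej_iff hα0).mp h
      have hKle : quteKi G n c α i.1 (P ω) ≤ F i ω := quteKi_zeroAt_le i.1 i hx0
      have hle0 : P ω i ≤ α * (F i ω) / N := by
        refine le_trans hle ?_
        gcongr
      have hKeq : quteKi G n c α i.1 (P ω) = F i ω :=
        quteKi_zeroAt_eq hα0 i hx0 hle0
      have hgval : g i ω = 1 / ((max (F i ω) 1 : ℕ) : ℝ) := by
        rw [hgdef]; simp only [if_pos hle0]
      rw [hgval]
      have hRK : max (F i ω) 1 ≤ max ((quteRej G n c α (P ω)).card) 1 := by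
        refine max_le_max ?_ le_rfl
        rw [← hKeq]
        exact quteKi_le_card_quteRej hα hNpos i.1
      refine one_div_le_one_div_of_le ?_ ?_
      · have : (1:ℕ) ≤ max (F i ω) 1 := le_max_right _ _
        exact_mod_cast lt_of_lt_of_le Nat.zero_lt_one this
      · exact_mod_cast hRK
    · rw [if_neg h]
      simpa using hgnonneg i ω
  -- the per-hypothesis bound
  have key : ∀ i ∈ H0, ∫ ω, g i ω ∂μ ≤ α / N := by
    intro i hi
    -- independence of `P i` and `F i`
    have hIF : IndepFun (fun ω => P ω i) (F i) μ := by
      have h1 := hindep.indepFun_finset {i} (Finset.univ.erase i) (by simp) hPmeas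
      set φ : (({i} : Finset (Σ a : V, Fin (n a))) → ℝ) → ℝ :=
        fun v => v ⟨i, Finset.mem_singleton_self i⟩ with hφdef
      set ψ : (((Finset.univ.erase i) : Finset (Σ a : V, Fin (n a))) → ℝ) → ℕ :=
        fun y => quteKi G n c α i.1 (fun j => if h : j = i then 0
          else y ⟨j, Finset.mem_erase.mpr ⟨h, Finset.mem_univ j⟩⟩) with hψdef
      have hφ : Measurable φ := measurable_pi_apply _
      have hψ : Measurable ψ := by
        refine (measurable_quteKi G n c α i.1).comp (measurable_pi_lambda _ fun j => ?_)
        by_cases h : j = i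
        · simpa [hψdef, h] using
            (measurable_const :
              Measurable fun _ : ((Finset.univ.erase i : Finset (Σ a : V, Fin (n a))) → ℝ) => (0:ℝ))
        · simpa [hψdef, h] using
            (measurable_pi_apply
              (⟨j, Finset.mem_erase.mpr ⟨h, Finset.mem_univ j⟩⟩ :
                ((Finset.univ.erase i : Finset (Σ a : V, Fin (n a))))))
      have h2 := h1.comp hφ hψ
      have hleft : (φ ∘ fun ω (j : ({i} : Finset (Σ a : V, Fin (n a)))) => P ω j)
          = fun ω => P ω i := rfl
      have hright : (ψ ∘ fun ω (j : ((Finset.univ.erase i) : Finset (Σ a : V, Fin (n a)))) =>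
          P ω j) = F i := by
        funext ω
        show ψ (fun j => P ω j) = F i ω
        rw [hψdef, hFdef]
        simp only
        congr 1
        funext j
        by_cases h : j = i
        · simp [zeroAt, h]
        · simp [zeroAt, h]
      rwa [hleft, hright] at h2
    -- decompose the integral over the values of `F i`
    set A : ℕ → Set Ω :=
      fun k => ((fun ω => P ω i) ⁻¹' (Set.Iic (α * k / N))) ∩ ((F i) ⁻¹' {k}) with hAdef
    have hmemA : ∀ (k : ℕ) (ω : Ω), ω ∈ A k ↔ (P ω i ≤ α * k / N ∧ F i ω = k) := by
      intro k ω; rw [hAdef]; exact Iff.rfl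
    have hAmeas : ∀ k, MeasurableSet (A k) := fun k =>
      ((hPmeas i) measurableSet_Iic).inter ((hFmeas i) (measurableSet_singleton k))
    have hgrep : ∀ ω, g i ω = ∑ k ∈ Finset.range (N+1),
        Set.indicator (A k) (fun _ => (1:ℝ) / ((max k 1 : ℕ) : ℝ)) ω := by
      intro ω
      rw [Finset.sum_eq_single (F i ω)]
      · by_cases h : P ω i ≤ α * (F i ω) / N
        · rw [Set.indicator_of_mem ((hmemA _ _).mpr ⟨h, rfl⟩), hgdef]
          simp only [if_pos h]
        · rw [Set.indicator_of_notMem (fun hc => h ((hmemA _ _).mp hc).1), hgdef]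
          simp only [if_neg h, zero_div]
      · intro k _ hne
        exact Set.indicator_of_notMem (fun hc => hne (((hmemA _ _).mp hc).2.symm)) _
      · intro h
        exact absurd (Finset.mem_range.mpr (Nat.lt_succ_of_le (hFle i ω))) h
    have hint : ∀ k, Integrable
        (fun ω => Set.indicator (A k) (fun _ => (1:ℝ) / ((max k 1 : ℕ) : ℝ)) ω) μ := by
      intro k
      exact (integrable_const _).indicator (hAmeas k)
    calc ∫ ω, g i ω ∂μ
        = ∑ k ∈ Finset.range (N+1),
            ∫ ω, Set.indicator (A k) (fun _ => (1:ℝ) / ((max k 1 : ℕ) : ℝ)) ω ∂μ := by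
          rw [show (fun ω => g i ω) = fun ω => ∑ k ∈ Finset.range (N+1),
            Set.indicator (A k) (fun _ => (1:ℝ) / ((max k 1 : ℕ) : ℝ)) ω from funext hgrep]
          exact integral_finset_sum _ fun k _ => hint k
      _ = ∑ k ∈ Finset.range (N+1), (μ (A k)).toReal * ((1:ℝ) / ((max k 1 : ℕ) : ℝ)) := by
          refine Finset.sum_congr rfl fun k _ => ?_
          rw [integral_indicator_const _ (hAmeas k), smul_eq_mul, Measure.real]
      _ ≤ ∑ k ∈ Finset.range (N+1), (α / N) * (μ ((F i) ⁻¹' {k})).toReal := by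
          refine Finset.sum_le_sum fun k hk => ?_
          have hkN : k ≤ N := Nat.lt_succ_iff.mp (Finset.mem_range.mp hk)
          have hu01 : α * k / N ∈ Set.Icc (0:ℝ) 1 := by
            constructor
            · positivity
            · have hkNR : (k:ℝ) ≤ N := by exact_mod_cast hkN
              calc α * k / N ≤ α * N / N := by gcongr
                _ = α := by field_simp
                _ ≤ 1 := hα.2.le
          have hsplit : μ (A k) = μ ((fun ω => P ω i) ⁻¹' (Set.Iic (α * k / N)))
              * μ ((F i) ⁻¹' {k}) :=
            hIF.measure_inter_preimage_eq_mul _ _ measurableSet_Iic (measurableSet_singleton k)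
          have hPbound : μ ((fun ω => P ω i) ⁻¹' (Set.Iic (α * k / N)))
              ≤ ENNReal.ofReal (α * k / N) := hnull i hi _ hu01
          have hABound : μ (A k) ≤ ENNReal.ofReal (α * k / N) * μ ((F i) ⁻¹' {k}) := by
            rw [hsplit]
            exact mul_le_mul_left hPbound _
          have hne : ENNReal.ofReal (α * k / N) * μ ((F i) ⁻¹' {k}) ≠ ⊤ :=
            ENNReal.mul_ne_top ENNReal.ofReal_ne_top (measure_ne_top μ _)
          have htoReal : (μ (A k)).toReal ≤ (α * k / N) * (μ ((F i) ⁻¹' {k})).toReal := by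
            have := ENNReal.toReal_mono hne hABound
            rwa [ENNReal.toReal_mul, ENNReal.toReal_ofReal hu01.1] at this
          have hmax1 : (0:ℝ) < ((max k 1 : ℕ) : ℝ) := by
            have : (1:ℕ) ≤ max k 1 := le_max_right _ _
            exact_mod_cast lt_of_lt_of_le Nat.zero_lt_one this
          have hkmax : (k:ℝ) / ((max k 1 : ℕ) : ℝ) ≤ 1 := by
            refine div_le_one_of_le₀ ?_ hmax1.le
            exact_mod_cast le_max_left k 1
          calc (μ (A k)).toReal * ((1:ℝ) / ((max k 1 : ℕ) : ℝ))
              ≤ ((α * k / N) * (μ ((F i) ⁻¹' {k})).toReal) * ((1:ℝ) / ((max k 1 : ℕ) : ℝ)) := by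
                refine mul_le_mul_of_nonneg_right htoReal (by positivity)
            _ = (α / N) * ((k:ℝ) / ((max k 1 : ℕ) : ℝ)) * (μ ((F i) ⁻¹' {k})).toReal := by
                ring
            _ ≤ (α / N) * 1 * (μ ((F i) ⁻¹' {k})).toReal := by
                refine mul_le_mul_of_nonneg_right ?_ ENNReal.toReal_nonneg
                refine mul_le_mul_of_nonneg_left hkmax (by positivity)
            _ = (α / N) * (μ ((F i) ⁻¹' {k})).toReal := by ring
      _ = (α / N) * ∑ k ∈ Finset.range (N+1), (μ ((F i) ⁻¹' {k})).toReal := by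
          rw [Finset.mul_sum]
      _ = α / N := by
          have hdisj : (↑(Finset.range (N+1)) : Set ℕ).PairwiseDisjoint
              (fun k => (F i) ⁻¹' {k}) := by
            intro k _ l _ hkl
            refine Set.disjoint_left.mpr fun ω hk hl => ?_
            exact hkl (hk.symm.trans hl)
          have hunion : ⋃ k ∈ Finset.range (N+1), (F i) ⁻¹' {k} = Set.univ := by
            ext ω
            simp only [Set.mem_iUnion, Finset.mem_range, Set.mem_preimage,
              Set.mem_singleton_iff, Set.mem_univ, iff_true]
            exact ⟨F i ω, Nat.lt_succ_of_le (hFle i ω), rfl⟩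
          have hsum : ∑ k ∈ Finset.range (N+1), μ ((F i) ⁻¹' {k}) = 1 := by
            rw [← measure_biUnion_finset hdisj
              (fun k _ => (hFmeas i) (measurableSet_singleton k)), hunion]
            exact measure_univ
          have : ∑ k ∈ Finset.range (N+1), (μ ((F i) ⁻¹' {k})).toReal
              = (∑ k ∈ Finset.range (N+1), μ ((F i) ⁻¹' {k})).toReal := by
            rw [ENNReal.toReal_sum fun k _ => measure_ne_top μ _]
          rw [this, hsum]
          simp
  -- put everything together
  calc ∫ ω, f0 ω ∂μ
      ≤ ∫ ω, ∑ i ∈ H0, g i ω ∂μ :=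
        integral_mono hf0int (integrable_finset_sum _ fun i _ => hgint i) hpt
    _ = ∑ i ∈ H0, ∫ ω, g i ω ∂μ := integral_finset_sum _ fun i _ => hgint i
    _ ≤ ∑ i ∈ H0, α / N := Finset.sum_le_sum key
    _ = (H0.card : ℝ) * (α / N) := by rw [Finset.sum_const, nsmul_eq_mul]
    _ = α * H0.card / N := by ring
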